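/- (Hanson–Wright inequality for Gaussian vectors) Let M ∈ ℝ^{d×d} and let v be a random vector in ℝ^d with independent standard Gaussian N(0,1) coordinates. Then for every t > 0, P( |vᵀMv − tr(M)| > t ) ≤ 2 exp( −(1/8) · min( t² / ‖M‖_F², t / ‖M‖_2 ) ). -/

import Mathlib

open Matrix MeasureTheory ProbabilityTheory Real
open scoped BigOperators

/-- The Frobenius norm of a matrix. -/
noncomputable def frobNorm {m n : ℕ} (M : Matrix (Fin m) (Fin n) ℝ) : ℝ :=
  Real.sqrt (∑ i, ∑ j, (M i j) ^ 2)

/-- The spectral (ℓ²-operator) norm of a matrix. -/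
noncomputable def specNorm {m n : ℕ} (M : Matrix (Fin m) (Fin n) ℝ) : ℝ :=
  ‖LinearMap.toContinuousLinearMap (Matrix.toEuclideanLin M)‖

section Scalar

lemma key_ineq {u : ℝ} (h : |u| ≤ 1/2) : Real.exp (-(u + u^2)) ≤ 1 - u := by
  have habs := abs_le.mp h
  have h1 : -(u+u^2) = (-u) + (-u^2) := by ring
  rw [h1, Real.exp_add]
  have hu2 : |(-u^2 : ℝ)| ≤ 1 := by
    rw [abs_neg, abs_of_nonneg (sq_nonneg u)]
    nlinarith [habs.1, habs.2]
  have e2 : Real.exp (-u^2) ≤ 1 - u^2 + 3/4 * u^4 := by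
    have hb := Real.exp_bound hu2 (n := 2) (by norm_num)
    have h2 := (abs_le.mp hb).2
    have hs : ∑ i ∈ Finset.range 2, (-u^2)^i / (Nat.factorial i) = 1 - u^2 := by
      simp [Finset.sum_range_succ, Nat.factorial]; try ring
    rw [hs, abs_neg, abs_of_nonneg (sq_nonneg u)] at h2
    norm_num [Nat.factorial] at h2
    nlinarith [h2]
  rcases le_or_gt 0 u with hu | hu
  · have h12 : (0:ℝ) ≤ 1/2 - u := by linarith [habs.2]
    have hu1 : |(-u : ℝ)| ≤ 1 := by rw [abs_neg, abs_of_nonneg hu]; linarith [habs.2]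
    have e1 : Real.exp (-u) ≤ 1 - u + u^2/2 - u^3/6 + 5/96 * u^4 := by
      have hb := Real.exp_bound hu1 (n := 4) (by norm_num)
      have h2 := (abs_le.mp hb).2
      have hs : ∑ i ∈ Finset.range 4, (-u)^i / (Nat.factorial i) = 1 - u + u^2/2 - u^3/6 := by
        norm_num [Finset.sum_range_succ, Nat.factorial]
        ring
      rw [hs, abs_neg, abs_of_nonneg hu] at h2
      norm_num [Nat.factorial] at h2
      nlinarith [h2]
    calc Real.exp (-u) * Real.exp (-u^2)
        ≤ (1 - u + u^2/2 - u^3/6 + 5/96 * u^4) * (1 - u^2 + 3/4 * u^4) :=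
          mul_le_mul e1 e2 (Real.exp_pos _).le (by nlinarith [e1, Real.exp_pos (-u)])
      _ ≤ 1 - u := by
          nlinarith [mul_nonneg (pow_nonneg hu 2) h12, mul_nonneg (pow_nonneg hu 3) h12,
            mul_nonneg (pow_nonneg hu 4) h12, mul_nonneg (pow_nonneg hu 5) h12,
            mul_nonneg (pow_nonneg hu 6) h12, mul_nonneg (pow_nonneg hu 7) h12,
            pow_nonneg hu 8]
  · obtain ⟨v, rfl⟩ : ∃ v : ℝ, u = -v := ⟨-u, by ring⟩
    have hv0 : (0:ℝ) ≤ v := by linarith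
    have hv2 : v ≤ 1/2 := by linarith [habs.1]
    have h12 : (0:ℝ) ≤ 1/2 - v := by linarith
    have hu1 : |v| ≤ 1 := by rw [abs_of_nonneg hv0]; linarith
    have e1 : Real.exp v ≤ 1 + v + 3/4 * v^2 := by
      have hb := Real.exp_bound hu1 (n := 2) (by norm_num)
      have h2 := (abs_le.mp hb).2
      have hs : ∑ i ∈ Finset.range 2, v^i / (Nat.factorial i) = 1 + v := by
        simp [Finset.sum_range_succ, Nat.factorial]; try ring
      rw [hs, abs_of_nonneg hv0] at h2
      norm_num [Nat.factorial] at h2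
      nlinarith [h2]
    have hneg : Real.exp (-(-v)) = Real.exp v := by norm_num
    have he2 : Real.exp (-(-v)^2) ≤ 1 - v^2 + 3/4 * v^4 := by
      calc Real.exp (-(-v)^2) ≤ 1 - (-v)^2 + 3/4*(-v)^4 := e2
        _ = 1 - v^2 + 3/4 * v^4 := by ring
    rw [hneg]
    have h1v : (1:ℝ) - -v = 1 + v := by ring
    rw [h1v]
    calc Real.exp v * Real.exp (-(-v)^2)
        ≤ (1 + v + 3/4 * v^2) * (1 - v^2 + 3/4 * v^4) :=
          mul_le_mul e1 he2 (Real.exp_pos _).le (by nlinarith [hv0, hv2])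
      _ ≤ 1 + v := by
          nlinarith [mul_nonneg (pow_nonneg hv0 2) h12, mul_nonneg (pow_nonneg hv0 3) h12,
            mul_nonneg (pow_nonneg hv0 4) h12, mul_nonneg (pow_nonneg hv0 5) h12,
            pow_nonneg hv0 6]

lemma scalar_bound {a : ℝ} (ha : |a| ≤ 1/4) :
    Real.exp (-a) * (Real.sqrt (2*π))⁻¹ * Real.sqrt (π/(1/2-a)) ≤ Real.exp (2*a^2) := by
  have habs := abs_le.mp ha
  have hb : (0:ℝ) < 1/2 - a := by linarith
  have h1 : (0:ℝ) < 1 - 2*a := by linarith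
  have hpos : (0:ℝ) < Real.sqrt (π/(1/2-a)) := Real.sqrt_pos.mpr (by positivity)
  have hsq : Real.sqrt (2*π) = Real.sqrt (1-2*a) * Real.sqrt (π/(1/2-a)) := by
    rw [← Real.sqrt_mul h1.le]
    congr 1
    field_simp
  rw [hsq]
  have hkey : Real.exp (-a - 2*a^2) ≤ Real.sqrt (1-2*a) := by
    rw [Real.le_sqrt (Real.exp_pos _).le h1.le]
    have : Real.exp (-a - 2*a^2) ^ 2 = Real.exp (-(2*a + (2*a)^2)) := by
      rw [pow_two, ← Real.exp_add]; ring_nf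
    rw [this]
    exact key_ineq (by rw [abs_mul]; simpa using by linarith [abs_le.mpr habs] : |2*a| ≤ 1/2)
  have hs1 : (0:ℝ) < Real.sqrt (1-2*a) := Real.sqrt_pos.mpr h1
  have hre : Real.exp (-a) * (Real.sqrt (1-2*a) * Real.sqrt (π/(1/2-a)))⁻¹ * Real.sqrt (π/(1/2-a))
      = Real.exp (-a) * (Real.sqrt (1-2*a))⁻¹ := by
    rw [mul_inv, mul_assoc, inv_mul_cancel_right₀ hpos.ne']
  rw [hre, mul_inv_le_iff₀ hs1]
  calc Real.exp (-a) = Real.exp (2*a^2) * Real.exp (-a - 2*a^2) := by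
        rw [← Real.exp_add]; ring_nf
    _ ≤ Real.exp (2*a^2) * Real.sqrt (1-2*a) := by
        exact mul_le_mul_of_nonneg_left hkey (Real.exp_pos _).le

lemma exponent_bound {t F2 S : ℝ} (ht : 0 < t) (hF : 0 < F2) (hS : 0 < S) :
    2 * (min (t/(4*F2)) (1/(4*S)))^2 * F2 - (min (t/(4*F2)) (1/(4*S))) * t
      ≤ -(1/8) * min (t^2/F2) (t/S) := by
  rcases le_total (t/(4*F2)) (1/(4*S)) with h | h
  · rw [min_eq_left h]
    have h2 : t * S ≤ F2 := by
      rw [div_le_div_iff₀ (by positivity) (by positivity)] at h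
      nlinarith
    have hmin : min (t^2/F2) (t/S) = t^2/F2 := by
      apply min_eq_left
      rw [div_le_div_iff₀ hF hS]
      nlinarith
    rw [hmin]
    field_simp
    nlinarith [sq_nonneg t, sq_nonneg F2, mul_pos ht hF]
  · rw [min_eq_right h]
    have h2 : F2 ≤ t * S := by
      rw [div_le_div_iff₀ (by positivity) (by positivity)] at h
      nlinarith
    have hmin : min (t^2/F2) (t/S) = t/S := by
      apply min_eq_right
      rw [div_le_div_iff₀ hS hF]
      nlinarith
    rw [hmin]
    rw [div_le_div_iff₀ (by positivity) (by positivity)] at h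
    rw [sub_le_iff_le_add]
    have e1 : 2 * (1/(4*S))^2 * F2 = F2/(8*S^2) := by field_simp; ring
    have e2 : -(1/8) * (t/S) + 1/(4*S) * t = t/(8*S) := by field_simp; ring
    rw [e1, e2, div_le_div_iff₀ (by positivity) (by positivity)]
    nlinarith [mul_pos ht hS, sq_nonneg S]

end Scalar

section OneDim

lemma one_dim {a : ℝ} (ha : |a| ≤ 1/4) :
    ∫⁻ x, ENNReal.ofReal (Real.exp (a * x^2 - a)) ∂(gaussianReal 0 1)
      ≤ ENNReal.ofReal (Real.exp (2 * a^2)) := by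
  have habs := abs_le.mp ha
  have hb : (0:ℝ) < 1/2 - a := by linarith
  rw [gaussianReal_of_var_ne_zero 0 one_ne_zero]
  rw [lintegral_withDensity_eq_lintegral_mul volume (measurable_gaussianPDF 0 1)
    (by fun_prop : Measurable fun x : ℝ => ENNReal.ofReal (Real.exp (a * x^2 - a)))]
  have hrw : ∀ x : ℝ, (gaussianPDF 0 1 * fun x => ENNReal.ofReal (Real.exp (a * x^2 - a))) x
      = ENNReal.ofReal ((Real.sqrt (2*π))⁻¹ * Real.exp (-a) * Real.exp (-(1/2-a) * x^2)) := by
    intro x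
    simp only [Pi.mul_apply, gaussianPDF_def, ← ENNReal.ofReal_mul (gaussianPDFReal_nonneg 0 1 x)]
    congr 1
    simp only [gaussianPDFReal, NNReal.coe_one, mul_one, sub_zero, mul_assoc, ← Real.exp_add]
    congr 1
    ring
  simp_rw [hrw]
  have hint : Integrable (fun x : ℝ => (Real.sqrt (2*π))⁻¹ * Real.exp (-a) * Real.exp (-(1/2-a) * x^2)) :=
    (integrable_exp_neg_mul_sq hb).const_mul _
  rw [← MeasureTheory.ofReal_integral_eq_lintegral_ofReal hint (ae_of_all _ (fun x => by positivity))]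
  apply ENNReal.ofReal_le_ofReal
  rw [integral_const_mul, integral_gaussian]
  calc (Real.sqrt (2*π))⁻¹ * Real.exp (-a) * Real.sqrt (π/(1/2-a))
      = Real.exp (-a) * (Real.sqrt (2*π))⁻¹ * Real.sqrt (π/(1/2-a)) := by ring
    _ ≤ Real.exp (2*a^2) := scalar_bound ha

end OneDim

section PiMeasure

lemma lintegral_pi_prod : ∀ {n : ℕ} (μ : Measure ℝ) [SigmaFinite μ]
    (f : Fin n → ℝ → ENNReal), (∀ i, Measurable (f i)) →
    ∫⁻ x : Fin n → ℝ, ∏ i, f i (x i) ∂Measure.pi (fun _ => μ) = ∏ i, ∫⁻ x, f i x ∂μ := by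
  intro n
  induction n with
  | zero =>
    intro μ _ f hf
    simp only [Finset.univ_eq_empty, Finset.prod_empty, lintegral_one]
    rw [Measure.pi_univ]
    simp
  | succ n ih =>
    intro μ _ f hf
    have hmp := MeasureTheory.measurePreserving_piFinSuccAbove (fun _ : Fin (n+1) => μ) 0
    set e := MeasurableEquiv.piFinSuccAbove (fun _ : Fin (n+1) => ℝ) 0 with he
    have hg : Measurable (fun p : ℝ × (Fin n → ℝ) => f 0 p.1 * ∏ j : Fin n, f j.succ (p.2 j)) := by
      apply Measurable.mul
      · exact (hf 0).comp measurable_fst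
      · apply Finset.measurable_prod
        intro j _
        exact (hf j.succ).comp ((measurable_pi_apply j).comp measurable_snd)
    have hcomp : ∀ x : Fin (n+1) → ℝ,
        (fun p : ℝ × (Fin n → ℝ) => f 0 p.1 * ∏ j : Fin n, f j.succ (p.2 j)) (e x)
          = ∏ i, f i (x i) := by
      intro x
      rw [Fin.prod_univ_succ]
      simp [e, MeasurableEquiv.piFinSuccAbove, Fin.succAbove, Fin.tail]
    calc ∫⁻ x : Fin (n+1) → ℝ, ∏ i, f i (x i) ∂Measure.pi (fun _ => μ)
        = ∫⁻ x, (fun p : ℝ × (Fin n → ℝ) => f 0 p.1 * ∏ j : Fin n, f j.succ (p.2 j)) (e x)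
            ∂Measure.pi (fun _ => μ) := by
          congr 1; ext x; rw [hcomp]
      _ = ∫⁻ p, f 0 p.1 * ∏ j : Fin n, f j.succ (p.2 j) ∂(μ.prod (Measure.pi fun _ : Fin n => μ)) :=
          hmp.lintegral_comp hg
      _ = (∫⁻ x, f 0 x ∂μ) * (∫⁻ y : Fin n → ℝ, ∏ j : Fin n, f j.succ (y j) ∂Measure.pi (fun _ => μ)) := by
          exact MeasureTheory.lintegral_prod_mul (f := f 0)
            (g := fun y : Fin n → ℝ => ∏ j : Fin n, f j.succ (y j)) ((hf 0).aemeasurable)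
            ((Finset.measurable_prod Finset.univ
              (fun j _ => (hf j.succ).comp (measurable_pi_apply j))).aemeasurable)
      _ = (∫⁻ x, f 0 x ∂μ) * ∏ j : Fin n, ∫⁻ x, f j.succ x ∂μ := by
          rw [ih μ (fun j => f j.succ) (fun j => hf j.succ)]
      _ = ∏ i, ∫⁻ x, f i x ∂μ := (Fin.prod_univ_succ (fun i => ∫⁻ x, f i x ∂μ)).symm

lemma gaussian_pi_eq {d : ℕ} :
    Measure.pi (fun _ : Fin d => gaussianReal 0 1)
      = volume.withDensity (fun x : Fin d → ℝ => ENNReal.ofReal (∏ i, gaussianPDFReal 0 1 (x i))) := by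
  apply Measure.pi_eq
  intro s hs
  have hmeas : Measurable (fun x : Fin d → ℝ => ENNReal.ofReal (∏ i, gaussianPDFReal 0 1 (x i))) := by
    apply Measurable.ennreal_ofReal
    exact Finset.measurable_prod _ (fun i _ => (measurable_gaussianPDFReal 0 1).comp (measurable_pi_apply i))
  rw [withDensity_apply _ (MeasurableSet.univ_pi hs)]
  have key : ∀ x : Fin d → ℝ,
      (Set.univ.pi s).indicator (fun x : Fin d → ℝ => ENNReal.ofReal (∏ i, gaussianPDFReal 0 1 (x i))) x
        = ∏ i, (s i).indicator (fun t => ENNReal.ofReal (gaussianPDFReal 0 1 t)) (x i) := by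
    intro x
    by_cases hx : x ∈ Set.univ.pi s
    · rw [Set.indicator_of_mem hx]
      rw [ENNReal.ofReal_prod_of_nonneg (fun i _ => gaussianPDFReal_nonneg 0 1 (x i))]
      refine Finset.prod_congr rfl (fun i _ => ?_)
      rw [Set.indicator_of_mem (hx i (Set.mem_univ i))]
    · rw [Set.indicator_of_notMem hx]
      obtain ⟨i, hi⟩ : ∃ i, x i ∉ s i := by simpa [Set.mem_pi] using hx
      exact (Finset.prod_eq_zero (Finset.mem_univ i) (Set.indicator_of_notMem hi _)).symm
  rw [← lintegral_indicator (MeasurableSet.univ_pi hs)]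
  calc ∫⁻ x, (Set.univ.pi s).indicator _ x ∂volume
      = ∫⁻ x : Fin d → ℝ, ∏ i, (s i).indicator (fun t => ENNReal.ofReal (gaussianPDFReal 0 1 t)) (x i) ∂Measure.pi (fun _ => volume) := by
        rw [← volume_pi]; exact lintegral_congr key
    _ = ∏ i, ∫⁻ t, (s i).indicator (fun t => ENNReal.ofReal (gaussianPDFReal 0 1 t)) t ∂volume := by
        refine lintegral_pi_prod volume _ (fun i => ?_)
        exact ((measurable_gaussianPDFReal 0 1).ennreal_ofReal).indicator (hs i)
    _ = ∏ i, gaussianReal 0 1 (s i) := by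
        refine Finset.prod_congr rfl (fun i _ => ?_)
        rw [lintegral_indicator (hs i), gaussianReal_of_var_ne_zero 0 one_ne_zero,
          withDensity_apply _ (hs i)]
        rfl

lemma prod_pdf_eq {d : ℕ} (v : Fin d → ℝ) :
    ∏ i, gaussianPDFReal 0 1 (v i) = ((Real.sqrt (2*π))⁻¹) ^ d * Real.exp (-(∑ i, (v i)^2)/2) := by
  simp only [gaussianPDFReal, NNReal.coe_one, mul_one, sub_zero]
  rw [Finset.prod_mul_distrib, Finset.prod_const, ← Real.exp_sum, Finset.card_univ, Fintype.card_fin]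
  congr 1
  rw [← Finset.sum_div]
  simp

lemma dot_sq_invariant {d : ℕ} {U : Matrix (Fin d) (Fin d) ℝ} (hU : Uᵀ * U = 1) (w : Fin d → ℝ) :
    ∑ i, ((U.mulVec w) i)^2 = ∑ i, (w i)^2 := by
  have h : ∀ v : Fin d → ℝ, ∑ i, (v i)^2 = v ⬝ᵥ v := by
    intro v; simp [dotProduct, pow_two]
  rw [h, h, dotProduct_mulVec, ← mulVec_transpose, mulVec_mulVec, hU, one_mulVec]

lemma measurable_mulVec' {d : ℕ} (U : Matrix (Fin d) (Fin d) ℝ) :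
    Measurable (fun w : Fin d → ℝ => U.mulVec w) := by
  have := LinearMap.continuous_on_pi (Matrix.mulVecLin U)
  have h : (fun w : Fin d → ℝ => U.mulVec w) = ⇑(Matrix.mulVecLin U) := by
    ext w i; rw [Matrix.mulVecLin_apply]
  rw [h]
  exact this.measurable

lemma volume_preserving_mulVec {d : ℕ} {U : Matrix (Fin d) (Fin d) ℝ} (hU : Uᵀ * U = 1) :
    MeasurePreserving (fun w : Fin d → ℝ => U.mulVec w) volume volume := by
  have hdet : U.det = 1 ∨ U.det = -1 := by
    have h1 : U.det * U.det = 1 := by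
      have := congrArg Matrix.det hU
      rwa [Matrix.det_mul, Matrix.det_transpose, Matrix.det_one] at this
    rcases mul_self_eq_one_iff.mp h1 with h | h
    · exact Or.inl h
    · exact Or.inr h
  have hdet0 : U.det ≠ 0 := by rcases hdet with h | h <;> rw [h] <;> norm_num
  refine ⟨measurable_mulVec' U, ?_⟩
  have h : (fun w : Fin d → ℝ => U.mulVec w) = ⇑(Matrix.toLin' U) := by
    ext w i; rw [Matrix.toLin'_apply]
  rw [h, Real.map_matrix_volume_pi_eq_smul_volume_pi hdet0]
  have : |U.det⁻¹| = 1 := by rcases hdet with h | h <;> rw [h] <;> norm_num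
  rw [this, ENNReal.ofReal_one, one_smul]

lemma gaussian_pi_invariant {d : ℕ} {U : Matrix (Fin d) (Fin d) ℝ} (hU : Uᵀ * U = 1) :
    MeasurePreserving (fun w : Fin d → ℝ => U.mulVec w)
      (Measure.pi fun _ => gaussianReal 0 1) (Measure.pi fun _ => gaussianReal 0 1) := by
  refine ⟨measurable_mulVec' U, ?_⟩
  rw [gaussian_pi_eq]
  set g : (Fin d → ℝ) → ENNReal := fun x => ENNReal.ofReal (∏ i, gaussianPDFReal 0 1 (x i)) with hg
  have hgmeas : Measurable g := by
    apply Measurable.ennreal_ofReal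
    exact Finset.measurable_prod _ (fun i _ => (measurable_gaussianPDFReal 0 1).comp (measurable_pi_apply i))
  have hginv : ∀ w, g (U.mulVec w) = g w := by
    intro w
    simp only [hg]
    rw [prod_pdf_eq, prod_pdf_eq, dot_sq_invariant hU]
  ext s hs
  rw [Measure.map_apply (measurable_mulVec' U) hs,
    withDensity_apply _ ((measurable_mulVec' U) hs), withDensity_apply _ hs,
    ← lintegral_indicator ((measurable_mulVec' U) hs), ← lintegral_indicator hs]
  have hpt : ∀ w, ((fun w : Fin d → ℝ => U.mulVec w) ⁻¹' s).indicator g w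
      = (s.indicator g) (U.mulVec w) := by
    intro w
    by_cases hw : U.mulVec w ∈ s
    · rw [Set.indicator_of_mem hw, Set.indicator_of_mem (by exact hw), hginv]
    · rw [Set.indicator_of_notMem hw, Set.indicator_of_notMem (by exact hw)]
  rw [lintegral_congr hpt]
  exact (volume_preserving_mulVec hU).lintegral_comp (hgmeas.indicator hs)

end PiMeasure

section Chernoff

lemma Lbound {d : ℕ} (lam : Fin d → ℝ) (s B : ℝ)
    (hs : ∀ i, |s * lam i| ≤ 1/4) (hB : ∑ i, (lam i)^2 ≤ B) :
    ∫⁻ w : Fin d → ℝ, ENNReal.ofReal (Real.exp (s * (∑ i, lam i * (w i)^2 - ∑ i, lam i)))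
      ∂(Measure.pi fun _ => gaussianReal 0 1)
      ≤ ENNReal.ofReal (Real.exp (2 * s^2 * B)) := by
  have hrw : ∀ w : Fin d → ℝ, ENNReal.ofReal (Real.exp (s * (∑ i, lam i * (w i)^2 - ∑ i, lam i)))
      = ∏ i, ENNReal.ofReal (Real.exp ((s * lam i) * (w i)^2 - s * lam i)) := by
    intro w
    rw [← ENNReal.ofReal_prod_of_nonneg (fun i _ => (Real.exp_pos _).le), ← Real.exp_sum]
    congr 1
    simp [mul_sub, Finset.mul_sum, ← Finset.sum_sub_distrib, mul_assoc]
  simp_rw [hrw]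
  rw [lintegral_pi_prod (gaussianReal 0 1)
    (fun i => fun x => ENNReal.ofReal (Real.exp ((s * lam i) * x^2 - s * lam i)))
    (fun i => by fun_prop)]
  calc ∏ i, ∫⁻ x, ENNReal.ofReal (Real.exp ((s * lam i) * x^2 - s * lam i)) ∂(gaussianReal 0 1)
      ≤ ∏ i, ENNReal.ofReal (Real.exp (2 * (s * lam i)^2)) :=
        Finset.prod_le_prod' (fun i _ => one_dim (hs i))
    _ = ENNReal.ofReal (Real.exp (∑ i, 2 * (s * lam i)^2)) := by
        rw [← ENNReal.ofReal_prod_of_nonneg (fun i _ => (Real.exp_pos _).le), ← Real.exp_sum]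
    _ ≤ ENNReal.ofReal (Real.exp (2 * s^2 * B)) := by
        apply ENNReal.ofReal_le_ofReal
        apply Real.exp_le_exp.mpr
        have h1 : ∑ i, 2 * (s * lam i)^2 = 2 * s^2 * ∑ i, (lam i)^2 := by
          rw [Finset.mul_sum]
          refine Finset.sum_congr rfl (fun i _ => by ring)
        rw [h1]
        have h2 : (0:ℝ) ≤ 2 * s^2 := by positivity
        exact mul_le_mul_of_nonneg_left hB h2

lemma markov_bound {d : ℕ} (X : (Fin d → ℝ) → ℝ) (hX : Measurable X) {s t c : ℝ} (hs : 0 < s)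
    (hL : ∫⁻ w : Fin d → ℝ, ENNReal.ofReal (Real.exp (s * X w))
        ∂(Measure.pi fun _ => gaussianReal 0 1) ≤ ENNReal.ofReal (Real.exp c)) :
    (Measure.pi fun _ : Fin d => gaussianReal 0 1) {w | t ≤ X w}
      ≤ ENNReal.ofReal (Real.exp (c - s * t)) := by
  set μd := Measure.pi fun _ : Fin d => gaussianReal 0 1
  have hsub : {w : Fin d → ℝ | t ≤ X w}
      ⊆ {w | ENNReal.ofReal (Real.exp (s * t)) ≤ ENNReal.ofReal (Real.exp (s * X w))} := by
    intro w hw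
    exact ENNReal.ofReal_le_ofReal (Real.exp_le_exp.mpr (mul_le_mul_of_nonneg_left hw hs.le))
  calc μd {w | t ≤ X w} ≤ μd {w | ENNReal.ofReal (Real.exp (s * t)) ≤ ENNReal.ofReal (Real.exp (s * X w))} :=
        measure_mono hsub
    _ ≤ (∫⁻ w, ENNReal.ofReal (Real.exp (s * X w)) ∂μd) / ENNReal.ofReal (Real.exp (s * t)) := by
        apply meas_ge_le_lintegral_div
        · exact ((Real.measurable_exp.comp (hX.const_mul s)).ennreal_ofReal).aemeasurable
        · simp [Real.exp_pos]
        · exact ENNReal.ofReal_ne_top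
    _ ≤ ENNReal.ofReal (Real.exp c) / ENNReal.ofReal (Real.exp (s * t)) := by
        exact ENNReal.div_le_div_right hL _
    _ = ENNReal.ofReal (Real.exp (c - s * t)) := by
        rw [← ENNReal.ofReal_div_of_pos (Real.exp_pos _), Real.exp_sub]

end Chernoff

section LinAlg

variable {d : ℕ} (M : Matrix (Fin d) (Fin d) ℝ)

noncomputable def symPart : Matrix (Fin d) (Fin d) ℝ := (2:ℝ)⁻¹ • (M + Mᵀ)

lemma symPart_isHermitian : (symPart M).IsHermitian := by
  rw [Matrix.IsHermitian, conjTranspose_eq_transpose_of_trivial, symPart,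
    transpose_smul, transpose_add, transpose_transpose, add_comm]

lemma quadForm_symPart (v : Fin d → ℝ) :
    v ⬝ᵥ (symPart M).mulVec v = v ⬝ᵥ M.mulVec v := by
  rw [symPart, smul_mulVec, dotProduct_smul, add_mulVec, dotProduct_add,
    mulVec_transpose, dotProduct_comm v (v ᵥ* M), ← dotProduct_mulVec]
  rw [smul_eq_mul]
  ring

lemma trace_symPart : (symPart M).trace = M.trace := by
  rw [symPart, trace_smul, trace_add, trace_transpose, smul_eq_mul]
  ring

lemma frob_symPart : ∑ i, ∑ j, ((symPart M) i j)^2 ≤ ∑ i, ∑ j, (M i j)^2 := by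
  have hentry : ∀ i j, (symPart M) i j = (M i j + M j i)/2 := by
    intro i j
    simp [symPart, Matrix.smul_apply, Matrix.add_apply, Matrix.transpose_apply]
    ring
  calc ∑ i, ∑ j, ((symPart M) i j)^2 ≤ ∑ i, ∑ j, ((M i j)^2 + (M j i)^2)/2 := by
        refine Finset.sum_le_sum (fun i _ => Finset.sum_le_sum (fun j _ => ?_))
        rw [hentry]
        nlinarith [sq_nonneg (M i j - M j i)]
    _ = ∑ i, ∑ j, (M i j)^2 := by
        have key : ∀ i, ∑ j, ((M i j)^2 + (M j i)^2)/2 = (∑ j, (M i j)^2)/2 + (∑ j, (M j i)^2)/2 := by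
          intro i; rw [← Finset.sum_div, Finset.sum_add_distrib, add_div]
        simp_rw [key]
        rw [Finset.sum_add_distrib, ← Finset.sum_div, ← Finset.sum_div,
          Finset.sum_comm (f := fun i j => (M j i)^2)]
        ring

noncomputable def lamb : Fin d → ℝ := (symPart_isHermitian M).eigenvalues
noncomputable def Umat : Matrix (Fin d) (Fin d) ℝ := (symPart_isHermitian M).eigenvectorUnitary

lemma star_Umat : star (Umat M) = (Umat M)ᵀ := by
  rw [Matrix.star_eq_conjTranspose, conjTranspose_eq_transpose_of_trivial]

lemma Umat_t_mul : (Umat M)ᵀ * Umat M = 1 := by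
  rw [← star_Umat]
  exact (Matrix.mem_unitaryGroup_iff').mp ((symPart_isHermitian M).eigenvectorUnitary).2

lemma Umat_mul_t : Umat M * (Umat M)ᵀ = 1 := by
  rw [← star_Umat]
  exact (Matrix.mem_unitaryGroup_iff).mp ((symPart_isHermitian M).eigenvectorUnitary).2

lemma hdiag : (Umat M)ᵀ * symPart M * Umat M = Matrix.diagonal (lamb M) := by
  have h := (symPart_isHermitian M).conjStarAlgAut_star_eigenvectorUnitary
  rw [Unitary.conjStarAlgAut_star_apply] at h
  rw [Matrix.star_eq_conjTranspose, conjTranspose_eq_transpose_of_trivial] at h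
  simpa [RCLike.ofReal_real_eq_id, lamb, Umat] using h

lemma symPart_transpose : (symPart M)ᵀ = symPart M := by
  rw [← conjTranspose_eq_transpose_of_trivial]
  exact symPart_isHermitian M

lemma quad_diag (w : Fin d → ℝ) :
    (Umat M *ᵥ w) ⬝ᵥ (symPart M *ᵥ (Umat M *ᵥ w)) = ∑ i, lamb M i * (w i)^2 := by
  have h1 : symPart M *ᵥ (Umat M *ᵥ w) = (symPart M * Umat M) *ᵥ w := mulVec_mulVec _ _ _
  rw [h1, dotProduct_mulVec, ← mulVec_transpose, transpose_mul, mulVec_mulVec,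
    mul_assoc, ← mul_assoc, symPart_transpose, hdiag]
  simp only [mulVec_diagonal, dotProduct]
  exact Finset.sum_congr rfl (fun i _ => by ring)

lemma trace_eq_sum_lamb : M.trace = ∑ i, lamb M i := by
  have h := congrArg Matrix.trace (hdiag M)
  rw [trace_diagonal] at h
  rw [← trace_symPart M, ← h, trace_mul_comm, ← mul_assoc, Umat_mul_t, one_mul]

lemma sum_lamb_sq : ∑ i, (lamb M i)^2 ≤ ∑ i, ∑ j, (M i j)^2 := by
  have hA2 : symPart M = Umat M * Matrix.diagonal (lamb M) * (Umat M)ᵀ := by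
    rw [← hdiag M]
    calc symPart M = (Umat M * (Umat M)ᵀ) * symPart M * (Umat M * (Umat M)ᵀ) := by
          rw [Umat_mul_t, one_mul, mul_one]
      _ = Umat M * ((Umat M)ᵀ * symPart M * Umat M) * (Umat M)ᵀ := by
          noncomm_ring
  have hAA : (symPart M * symPart M).trace = ∑ i, (lamb M i)^2 := by
    have e : symPart M * symPart M
        = Umat M * (Matrix.diagonal (lamb M) * Matrix.diagonal (lamb M)) * (Umat M)ᵀ := by
      rw [hA2]
      calc (Umat M * Matrix.diagonal (lamb M) * (Umat M)ᵀ) * (Umat M * Matrix.diagonal (lamb M) * (Umat M)ᵀ)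
          = Umat M * Matrix.diagonal (lamb M) * ((Umat M)ᵀ * Umat M) * Matrix.diagonal (lamb M) * (Umat M)ᵀ := by
            noncomm_ring
        _ = Umat M * (Matrix.diagonal (lamb M) * Matrix.diagonal (lamb M)) * (Umat M)ᵀ := by
            rw [Umat_t_mul, mul_one]
            noncomm_ring
    rw [e, trace_mul_comm, ← mul_assoc, ← mul_assoc, Umat_t_mul, one_mul,
      diagonal_mul_diagonal, trace_diagonal]
    exact Finset.sum_congr rfl (fun i _ => by ring)
  have htr : (symPart M * symPart M).trace = ∑ i, ∑ j, (symPart M i j)^2 := by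
    rw [Matrix.trace]
    simp only [Matrix.diag, Matrix.mul_apply]
    refine Finset.sum_congr rfl (fun i _ => Finset.sum_congr rfl (fun j _ => ?_))
    have : symPart M j i = symPart M i j := by
      conv_lhs => rw [← symPart_transpose M]
      rfl
    rw [this]; ring
  rw [← hAA, htr]
  exact frob_symPart M

lemma lamb_abs_le (i : Fin d) : |lamb M i| ≤ specNorm M := by
  set b := (symPart_isHermitian M).eigenvectorBasis i with hb
  have hb1 : ‖b‖ = 1 := (symPart_isHermitian M).eigenvectorBasis.orthonormal.1 i
  have hmv : symPart M *ᵥ ⇑b = lamb M i • ⇑b := (symPart_isHermitian M).mulVec_eigenvectorBasis i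
  have hquad : (⇑b : Fin d → ℝ) ⬝ᵥ (symPart M *ᵥ ⇑b) = lamb M i := by
    rw [hmv, dotProduct_smul, smul_eq_mul]
    have hbb : (⇑b : Fin d → ℝ) ⬝ᵥ ⇑b = 1 := by
      have h := real_inner_self_eq_norm_sq b
      rw [hb1] at h
      simp only [EuclideanSpace.inner_eq_star_dotProduct] at h
      simp only [dotProduct] at h ⊢
      simpa using h
    rw [hbb, mul_one]
  have hinner : (⇑b : Fin d → ℝ) ⬝ᵥ (M *ᵥ ⇑b) = inner ℝ b (Matrix.toEuclideanLin M b) := by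
    rw [EuclideanSpace.inner_eq_star_dotProduct, dotProduct_comm]
    rfl
  have : lamb M i = inner ℝ b (Matrix.toEuclideanLin M b) := by
    rw [← hinner, ← hquad, quadForm_symPart]
  rw [this]
  calc |inner ℝ b (Matrix.toEuclideanLin M b)| ≤ ‖b‖ * ‖Matrix.toEuclideanLin M b‖ :=
        abs_real_inner_le_norm _ _
    _ = ‖(LinearMap.toContinuousLinearMap (Matrix.toEuclideanLin M)) b‖ := by
        rw [hb1, one_mul]; rfl
    _ ≤ specNorm M * ‖b‖ := (LinearMap.toContinuousLinearMap (Matrix.toEuclideanLin M)).le_opNorm b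
    _ = specNorm M := by rw [hb1, mul_one]

lemma frob_sq_eq : frobNorm M ^ 2 = ∑ i, ∑ j, (M i j)^2 := by
  rw [frobNorm, Real.sq_sqrt (by positivity)]

lemma frob_sq_pos (hM : M ≠ 0) : 0 < frobNorm M ^ 2 := by
  rw [frob_sq_eq]
  rcases (by positivity : (0:ℝ) ≤ ∑ i, ∑ j, (M i j)^2).lt_or_eq with h | h
  · exact h
  · exfalso
    apply hM
    ext i j
    have h1 := (Finset.sum_eq_zero_iff_of_nonneg (fun i _ => by positivity)).mp h.symm i (Finset.mem_univ i)
    have h2 := (Finset.sum_eq_zero_iff_of_nonneg (fun j _ => by positivity)).mp h1 j (Finset.mem_univ j)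
    simpa using pow_eq_zero_iff (n := 2) (by norm_num) |>.mp h2

lemma specNorm_pos (hM : M ≠ 0) : 0 < specNorm M := by
  rcases (norm_nonneg (LinearMap.toContinuousLinearMap (Matrix.toEuclideanLin M))).lt_or_eq with h | h
  · exact h
  · exfalso
    apply hM
    have h0 : LinearMap.toContinuousLinearMap (Matrix.toEuclideanLin M) = 0 := by
      rw [← norm_eq_zero]; exact h.symm
    have h1 : Matrix.toEuclideanLin M = 0 :=
      LinearMap.ext fun x => by simpa using DFunLike.congr_fun h0 x
    exact (LinearEquiv.map_eq_zero_iff Matrix.toEuclideanLin).mp h1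

end LinAlg

/-- **Hanson–Wright inequality for Gaussian vectors.** For `v` with i.i.d. standard
Gaussian coordinates and any `t > 0`,
`P(|vᵀMv - tr M| > t) ≤ 2 exp(-(1/8) min(t²/‖M‖_F², t/‖M‖₂))`. -/
theorem stmt7 {d : ℕ} (M : Matrix (Fin d) (Fin d) ℝ) (t : ℝ) (ht : 0 < t) :
    (Measure.pi fun _ : Fin d => gaussianReal 0 1)
        {v : Fin d → ℝ | t < |v ⬝ᵥ M.mulVec v - Matrix.trace M|} ≤
      ENNReal.ofReal
        (2 * Real.exp (-(1 / 8) * min (t ^ 2 / frobNorm M ^ 2) (t / specNorm M))) := by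
  by_cases hM : M = 0
  · have hempty : {v : Fin d → ℝ | t < |v ⬝ᵥ M.mulVec v - Matrix.trace M|} = ∅ := by
      ext v
      simp [hM, ht.not_gt]
    rw [hempty, measure_empty]
    exact zero_le
  · set F2 := frobNorm M ^ 2 with hF2def
    set S := specNorm M with hSdef
    have hF2 : 0 < F2 := frob_sq_pos M hM
    have hS : 0 < S := specNorm_pos M hM
    set s := min (t/(4*F2)) (1/(4*S)) with hsdef
    have hs : 0 < s := lt_min (by positivity) (by positivity)
    have hsS : s ≤ 1/(4*S) := min_le_right _ _
    have hscond : ∀ i, |s * lamb M i| ≤ 1/4 := by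
      intro i
      rw [abs_mul, abs_of_pos hs]
      calc s * |lamb M i| ≤ (1/(4*S)) * S :=
            mul_le_mul hsS (lamb_abs_le M i) (abs_nonneg _) (by positivity)
        _ = 1/4 := by field_simp
    have hsum : ∑ i, (lamb M i)^2 ≤ F2 := by rw [hF2def, frob_sq_eq]; exact sum_lamb_sq M
    set X : (Fin d → ℝ) → ℝ := fun w => ∑ i, lamb M i * (w i)^2 - ∑ i, lamb M i with hXdef
    have hXmeas : Measurable X := by
      apply Measurable.sub _ measurable_const
      exact Finset.measurable_sum _ (fun i _ => (((measurable_pi_apply i).pow_const 2).const_mul _))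
    have hL : ∫⁻ w, ENNReal.ofReal (Real.exp (s * X w))
        ∂(Measure.pi fun _ : Fin d => gaussianReal 0 1)
        ≤ ENNReal.ofReal (Real.exp (2 * s^2 * F2)) := Lbound (lamb M) s F2 hscond hsum
    have hL2 : ∫⁻ w, ENNReal.ofReal (Real.exp (s * (- X w)))
        ∂(Measure.pi fun _ : Fin d => gaussianReal 0 1)
        ≤ ENNReal.ofReal (Real.exp (2 * s^2 * F2)) := by
      have hneg : ∀ w : Fin d → ℝ,
          s * (- X w) = s * (∑ i, (-(lamb M i)) * (w i)^2 - ∑ i, (-(lamb M i))) := by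
        intro w
        simp only [hXdef]
        congr 1
        simp [Finset.sum_neg_distrib]
        ring
      simp_rw [hneg]
      exact Lbound (fun i => -(lamb M i)) s F2 (fun i => by rw [mul_neg, abs_neg]; exact hscond i)
        (by simpa only [neg_sq] using hsum)
    have tail1 := markov_bound X hXmeas (t := t) hs hL
    have tail2 := markov_bound (fun w => - X w) hXmeas.neg (t := t) hs hL2
    have hT : Matrix.trace M = ∑ i, lamb M i := trace_eq_sum_lamb M
    have hmeasS : MeasurableSet {v : Fin d → ℝ | t < |v ⬝ᵥ M.mulVec v - Matrix.trace M|} := by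
      have hc : Continuous fun v : Fin d → ℝ => v ⬝ᵥ M.mulVec v := by
        have heq : (fun v : Fin d → ℝ => v ⬝ᵥ M.mulVec v)
            = fun v : Fin d → ℝ => ∑ i, v i * ∑ j, M i j * v j := rfl
        rw [heq]
        apply continuous_finset_sum
        intro i _
        exact (continuous_apply i).mul
          (continuous_finset_sum _ (fun j _ => (continuous_const.mul (continuous_apply j))))
      exact measurableSet_lt measurable_const ((hc.sub continuous_const).abs.measurable)
    have hpre : (fun w : Fin d → ℝ => Umat M *ᵥ w) ⁻¹' {v | t < |v ⬝ᵥ M.mulVec v - Matrix.trace M|}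
        = {w | t < |X w|} := by
      ext w
      simp only [Set.mem_preimage, Set.mem_setOf_eq]
      rw [← quadForm_symPart M (Umat M *ᵥ w), quad_diag M w, hT]
    have hmeasure_eq : (Measure.pi fun _ : Fin d => gaussianReal 0 1)
          {v | t < |v ⬝ᵥ M.mulVec v - Matrix.trace M|}
        = (Measure.pi fun _ : Fin d => gaussianReal 0 1) {w | t < |X w|} := by
      rw [← hpre]
      exact ((gaussian_pi_invariant (Umat_t_mul M)).measure_preimage hmeasS.nullMeasurableSet).symm
    have hsubset : {w : Fin d → ℝ | t < |X w|} ⊆ {w | t ≤ X w} ∪ {w | t ≤ - X w} := by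
      intro w hw
      simp only [Set.mem_setOf_eq] at hw
      rcases abs_cases (X w) with ⟨h1, _⟩ | ⟨h1, _⟩
      · left; exact (le_of_lt (h1 ▸ hw))
      · right; exact (le_of_lt (h1 ▸ hw))
    have hexp := exponent_bound ht hF2 hS
    rw [← hsdef] at hexp
    calc (Measure.pi fun _ : Fin d => gaussianReal 0 1)
          {v | t < |v ⬝ᵥ M.mulVec v - Matrix.trace M|}
        = (Measure.pi fun _ : Fin d => gaussianReal 0 1) {w | t < |X w|} := hmeasure_eq
      _ ≤ (Measure.pi fun _ : Fin d => gaussianReal 0 1) ({w | t ≤ X w} ∪ {w | t ≤ - X w}) :=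
          measure_mono hsubset
      _ ≤ (Measure.pi fun _ : Fin d => gaussianReal 0 1) {w | t ≤ X w}
          + (Measure.pi fun _ : Fin d => gaussianReal 0 1) {w | t ≤ - X w} := measure_union_le _ _
      _ ≤ ENNReal.ofReal (Real.exp (2 * s^2 * F2 - s * t))
          + ENNReal.ofReal (Real.exp (2 * s^2 * F2 - s * t)) := add_le_add tail1 tail2
      _ = ENNReal.ofReal (2 * Real.exp (2 * s^2 * F2 - s * t)) := by
          rw [← ENNReal.ofReal_add (Real.exp_pos _).le (Real.exp_pos _).le]
          congr 1
          ring
      _ ≤ ENNReal.ofReal (2 * Real.exp (-(1 / 8) * min (t ^ 2 / F2) (t / S))) := by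
          apply ENNReal.ofReal_le_ofReal
          have := Real.exp_le_exp.mpr hexp
          linarith
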